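/- Let ω be a cyclic singular word over a finite ordered alphabet A and b ∈ A with δ_b(ω) > 0. Then for any letters d, d' ≤ b with (d,d') ≠ (b,b), the word dd' does not occur as a factor of the cyclic word ω. -/

import Mathlib

/-- The lexicographic order on words induced by the order of the alphabet, with the
convention that `u ≺ v` whenever `v` is a proper prefix of `u`. -/
def wlt {A : Type*} [LinearOrder A] (u v : List A) : Prop :=
  (v ≠ u ∧ v <+: u) ∨
    ∃ (p s t : List A) (x y : A), x < y ∧ u = p ++ x :: s ∧ v = p ++ y :: t

/-- The alternating lexicographic order on words: at the first difference, the order of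
letters is used at even (0-based) positions and reversed at odd positions; if `v` is a
proper prefix of `u` then `u ≺_alt v` when `|v|` is even and `v ≺_alt u` when `|v|` is odd. -/
def altlt {A : Type*} [LinearOrder A] (u v : List A) : Prop :=
  (v ≠ u ∧ v <+: u ∧ Even v.length) ∨ (u ≠ v ∧ u <+: v ∧ Odd u.length) ∨
    ∃ (p s t : List A) (x y : A), u = p ++ x :: s ∧ v = p ++ y :: t ∧
      ((Even p.length ∧ x < y) ∨ (Odd p.length ∧ y < x))

/-- `r` is a linear representation (rotation) of the cyclic word represented by `w`. -/
def isRot {A : Type*} (w r : List A) : Prop := ∃ s t : List A, w = s ++ t ∧ r = t ++ s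

/-- `f` is a factor of the cyclic word represented by `w`. -/
def isCFactor {A : Type*} (f w : List A) : Prop := ∃ r : List A, isRot w r ∧ f <:+: r

/-- The cyclic word represented by `w` is singular: every factorization of it into two
nonempty non-palindromes `u`, `v` is synchronizing (`u ≺ u*` iff `v ≺ v*`). -/
def cyclicSingular {A : Type*} [LinearOrder A] (w : List A) : Prop :=
  ∀ u v : List A, u ≠ [] → v ≠ [] → isRot w (u ++ v) →
    u ≠ u.reverse → v ≠ v.reverse → (wlt u u.reverse ↔ wlt v v.reverse)

/-- `δ_b(w) = Σ_{c>b} |w|_c − Σ_{a<b} |w|_a`. -/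
def deltaW {A : Type*} [LinearOrder A] [Fintype A] (w : List A) (b : A) : ℤ :=
  (∑ c ∈ Finset.univ.filter (fun c => b < c), (w.count c : ℤ)) -
    (∑ a ∈ Finset.univ.filter (fun a => a < b), (w.count a : ℤ))

section Aux

set_option linter.unusedSectionVars false

variable {A : Type*} [LinearOrder A]

/-- If `u ≺ v` and they have the same length, then at the heads `u`'s letter is
not larger. -/
lemma wlt_head {u v : List A} (h : wlt u v) (hlen : u.length = v.length)
    {a c : A} (ha : u.head? = some a) (hc : v.head? = some c) (hne : a ≠ c) : a < c := by
  rcases h with ⟨hvu, hpre⟩ | ⟨p, s, t, x, y, hxy, hu, hv⟩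
  · exact absurd (hpre.eq_of_length hlen.symm) hvu
  · cases p with
    | nil =>
      simp only [List.nil_append] at hu hv
      subst hu; subst hv
      simp only [List.head?_cons, Option.some.injEq] at ha hc
      subst ha; subst hc; exact hxy
    | cons z p' =>
      subst hu; subst hv
      simp only [List.cons_append, List.head?_cons, Option.some.injEq] at ha hc
      exact absurd (ha.symm.trans hc) hne

lemma wlt_of_head_lt {a c : A} (s t : List A) (h : a < c) : wlt (a :: s) (c :: t) :=
  Or.inr ⟨[], s, t, a, c, h, rfl, rfl⟩

lemma isRot_of_isRotated {w r : List A} (h : w.IsRotated r) : isRot w r := by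
  obtain ⟨n, hn⟩ := h
  rcases eq_or_ne w [] with rfl | hw
  · exact ⟨[], [], by simp, by simpa using hn.symm⟩
  · have hlen : 0 < w.length := List.length_pos_iff.mpr hw
    have hmod : n % w.length ≤ w.length := le_of_lt (Nat.mod_lt _ hlen)
    refine ⟨w.take (n % w.length), w.drop (n % w.length), (List.take_append_drop _ _).symm, ?_⟩
    rw [← hn, ← List.rotate_mod, List.rotate_eq_drop_append_take hmod]

/-- If `l` is not `R`-chained, some adjacent pair violates `R`. -/
lemma not_chain'_split {R : A → A → Prop} :
    ∀ {l : List A}, ¬ l.Chain' R → ∃ l1 x y l2, l = l1 ++ x :: y :: l2 ∧ ¬ R x y := by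
  intro l
  induction l with
  | nil => intro h; exact absurd List.isChain_nil h
  | cons a t ih =>
    intro h
    cases t with
    | nil => exact absurd (List.isChain_singleton a) h
    | cons c t' =>
      simp only [List.Chain', List.isChain_cons_cons] at h
      by_cases hac : R a c
      · have h' : ¬ List.Chain' R (c :: t') := fun hh => h ⟨hac, hh⟩
        obtain ⟨l1, x, y, l2, heq, hR⟩ := ih h'
        exact ⟨a :: l1, x, y, l2, by simp [heq], hR⟩
      · exact ⟨[], a, c, t', rfl, hac⟩

/-- Counting lemma: if in `l` every letter `> b` is followed (inside `l`) by a letter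
`< b`, and the last letter of `l` is not `> b`, then `l` has at most as many letters
`> b` as letters `< b`. -/
lemma chain_count (b : A) :
    ∀ (n : ℕ) (l : List A), l.length ≤ n →
      l.Chain' (fun x y => b < x → y < b) →
      (∀ x ∈ l.getLast?, ¬ b < x) →
      l.countP (fun x => decide (b < x)) ≤ l.countP (fun x => decide (x < b)) := by
  intro n
  induction n with
  | zero =>
    intro l hl _ _
    have : l = [] := List.length_eq_zero_iff.mp (Nat.le_zero.mp hl)
    subst this; simp
  | succ n ih =>
    intro l hl hch hlast
    cases l with
    | nil => simp
    | cons a t =>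
      by_cases hab : b < a
      · -- a is big; t must be nonempty with small head
        cases t with
        | nil =>
          exact absurd hab (hlast a (by simp))
        | cons c t' =>
          simp only [List.Chain', List.isChain_cons_cons] at hch
          have hcsmall : c < b := hch.1 hab
          have hstep : t'.countP (fun x => decide (b < x)) ≤ t'.countP (fun x => decide (x < b)) := by
            apply ih t' (by simp at hl ⊢; omega) hch.2.tail
            intro x hx
            apply hlast
            cases t' with
            | nil => simp at hx
            | cons e t'' => simpa using hx
          have hc1 : (decide (b < c)) = false := by simp [asymm hcsmall]
          have hc2 : (decide (c < b)) = true := by simp [hcsmall]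
          have ha1 : (decide (b < a)) = true := by simp [hab]
          have ha2 : (decide (a < b)) = false := by simp [asymm hab]
          simp [List.countP_cons, hc1, hc2, ha1, ha2]
          omega
      · -- a is not big
        have hstep : t.countP (fun x => decide (b < x)) ≤ t.countP (fun x => decide (x < b)) := by
          apply ih t (by simp at hl ⊢; omega) hch.tail
          intro x hx
          apply hlast
          cases t with
          | nil => simp at hx
          | cons e t'' => simpa using hx
        have ha1 : (decide (b < a)) = false := by simp [hab]
        simp only [List.countP_cons, ha1, cond_false]
        by_cases h2 : a < b <;> simp [h2] <;> omega

/-- Mirrored counting lemma: every big letter is preceded by a small one. -/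
lemma chain_count' (b : A) (l : List A)
    (hch : l.Chain' (fun x y => b < y → x < b))
    (hhead : ∀ x ∈ l.head?, ¬ b < x) :
    l.countP (fun x => decide (b < x)) ≤ l.countP (fun x => decide (x < b)) := by
  have hrev : l.reverse.Chain' (fun x y => b < x → y < b) := by
    simp only [List.Chain', List.isChain_reverse]
    exact hch
  have := chain_count b l.reverse.length l.reverse le_rfl hrev
    (by rw [List.getLast?_reverse]; exact hhead)
  rwa [List.countP_reverse, List.countP_reverse] at this

lemma sum_count_eq (p : A → Prop) [DecidablePred p] [Fintype A] (w : List A) :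
    ∑ c ∈ Finset.univ.filter p, (w.count c : ℤ) = (w.countP (fun c => decide (p c)) : ℤ) := by
  induction w with
  | nil => simp
  | cons a t ih =>
    have h1 : ∑ c ∈ Finset.univ.filter p, ((a :: t).count c : ℤ)
        = ∑ c ∈ Finset.univ.filter p, ((t.count c : ℤ) + if a = c then 1 else 0) := by
      apply Finset.sum_congr rfl
      intro c _
      simp only [List.count_cons, beq_iff_eq]
      push_cast
      ring
    rw [h1, Finset.sum_add_distrib, ih, Finset.sum_ite_eq]
    by_cases h : p a <;> simp [List.countP_cons, h]

/-- `deltaW` in terms of `countP`. -/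
lemma deltaW_eq_countP [Fintype A] (w : List A) (b : A) :
    deltaW w b = (w.countP (fun c => decide (b < c)) : ℤ) - (w.countP (fun c => decide (c < b)) : ℤ) := by
  unfold deltaW
  rw [sum_count_eq (fun c => b < c) w, sum_count_eq (fun c => c < b) w]

/-- The sign clash: a rotation `u ++ v` where `u` goes from a low letter up to a high one
and `v` from a high letter down to a low one contradicts singularity. -/
lemma sign_clash {w : List A} (hs : cyclicSingular w)
    (a x y c : A) (s t : List A) (hax : a < x) (hcy : c < y)
    (hrot : isRot w ((a :: s ++ [x]) ++ (y :: t ++ [c]))) : False := by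
  set u : List A := a :: s ++ [x] with hu
  set v : List A := y :: t ++ [c] with hv
  have hurev : u.reverse = x :: (s.reverse ++ [a]) := by simp [hu]
  have hvrev : v.reverse = c :: (t.reverse ++ [y]) := by simp [hv]
  have huu : wlt u u.reverse := by
    rw [hurev, hu]
    exact wlt_of_head_lt _ _ hax
  have hune : u ≠ u.reverse := by
    intro h
    have := congrArg List.head? h
    rw [hurev] at this
    simp [hu] at this
    exact absurd this (ne_of_lt hax)
  have hvne : v ≠ v.reverse := by
    intro h
    have := congrArg List.head? h
    rw [hvrev] at this
    simp [hv] at this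
    exact absurd this (ne_of_gt hcy)
  have hvv : ¬ wlt v v.reverse := by
    intro h
    have hlen : v.length = v.reverse.length := (List.length_reverse).symm
    have := wlt_head h hlen (by simp [hv]) (by rw [hvrev]; rfl) (ne_of_gt hcy)
    exact absurd this (asymm hcy)
  have := (hs u v (by simp [hu]) (by simp [hv]) hrot hune hvne).mp huu
  exact hvv this

end Aux

theorem stmt14 {A : Type*} [LinearOrder A] [Fintype A] (w : List A) (b : A)
    (hs : cyclicSingular w) (hδ : 0 < deltaW w b)
    (d d' : A) (hd : d ≤ b) (hd' : d' ≤ b) (hne : ¬ (d = b ∧ d' = b)) :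
    ¬ isCFactor [d, d'] w := by
  rintro ⟨r, hrot, hinf⟩
  obtain ⟨p, q, hpq⟩ := hinf
  -- r = p ++ [d, d'] ++ q
  have hwr : w.IsRotated r := by
    obtain ⟨s, t, hw, hr⟩ := hrot
    rw [hw, hr]; exact List.isRotated_append
  set m : List A := q ++ p with hm
  have hC : w.IsRotated (d' :: m ++ [d]) := by
    have h1 : r = (p ++ [d]) ++ (d' :: q) := by
      rw [← hpq]; simp
    have h2 : r.IsRotated ((d' :: q) ++ (p ++ [d])) := by
      rw [h1]; exact List.isRotated_append
    have h3 : (d' :: q) ++ (p ++ [d]) = d' :: m ++ [d] := by simp [hm]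
    exact hwr.trans (h3 ▸ h2)
  have hperm : w.Perm (d' :: m ++ [d]) := hC.perm
  have hcount : ∀ (pr : A → Bool), w.countP pr = (d' :: m ++ [d]).countP pr :=
    fun pr => hperm.countP_eq pr
  have hδ' : (((d' :: m ++ [d]).countP (fun c => decide (c < b)) : ℤ))
      < ((d' :: m ++ [d]).countP (fun c => decide (b < c)) : ℤ) := by
    rw [deltaW_eq_countP, hcount (fun c => decide (b < c)), hcount (fun c => decide (c < b))] at hδ
    omega
  rcases lt_or_eq_of_le hd with hdb | hdb
  · -- case d < b : consider l = m ++ [d]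
    by_cases hch : (m ++ [d]).Chain' (fun x y => b < x → y < b)
    · -- counting contradiction
      have hlast : ∀ x ∈ (m ++ [d]).getLast?, ¬ b < x := by
        intro x hx
        rw [List.getLast?_concat, Option.mem_def, Option.some.injEq] at hx
        subst hx
        exact not_lt.mpr hd
      have hcnt := chain_count b (m ++ [d]).length (m ++ [d]) le_rfl hch hlast
      have h1 : (d' :: m ++ [d]).countP (fun c => decide (b < c))
          = (m ++ [d]).countP (fun c => decide (b < c)) := by
        have hdec : (decide (b < d')) = false := by simp [not_lt.mpr hd']
        rw [show (d' :: m ++ [d]) = d' :: (m ++ [d]) from rfl, List.countP_cons, hdec]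
        simp
      have h2 : (m ++ [d]).countP (fun c => decide (c < b))
          ≤ (d' :: m ++ [d]).countP (fun c => decide (c < b)) := by
        rw [show (d' :: m ++ [d]) = d' :: (m ++ [d]) from rfl, List.countP_cons]
        omega
      omega
    · -- extract a violating pair : big letter followed by a non-small letter
      obtain ⟨l1, x, y, l2, heq, hR⟩ := not_chain'_split hch
      push_neg at hR
      obtain ⟨hbx, hby⟩ := hR
      -- hbx : b < x, hby : b ≤ y
      have hl2ne : l2 ≠ [] := by
        intro h
        subst h
        have hlast : (m ++ [d]).getLast? = some d := List.getLast?_concat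
        rw [heq] at hlast
        have h2 : l1 ++ x :: y :: ([] : List A) = (l1 ++ [x]) ++ [y] := by simp
        rw [h2, List.getLast?_concat, Option.some.injEq] at hlast
        rw [hlast] at hby
        exact absurd (lt_of_lt_of_le hdb hby) (lt_irrefl d)
      obtain ⟨l2', hl2⟩ : ∃ l2', l2 = l2' ++ [d] := by
        have hlast : (l1 ++ x :: y :: l2).getLast? = some d := by
          rw [← heq]; exact List.getLast?_concat
        have h4 : (l1 ++ x :: y :: l2).getLast? = l2.getLast? := by
          rw [show l1 ++ x :: y :: l2 = (l1 ++ [x, y]) ++ l2 by simp]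
          cases l2 with
          | nil => exact absurd rfl hl2ne
          | cons e l2'' =>
            rw [List.getLast?_append_of_ne_nil]
            simp
        rw [h4, List.getLast?_eq_getLast hl2ne, Option.some.injEq] at hlast
        refine ⟨l2.dropLast, ?_⟩
        have h3 := List.dropLast_append_getLast hl2ne
        rw [hlast] at h3
        exact h3.symm
      -- build the two arcs
      apply sign_clash hs d' x y d l1 l2' (lt_of_le_of_lt hd' hbx) (lt_of_lt_of_le hdb hby)
      apply isRot_of_isRotated
      have hsplit : m ++ [d] = l1 ++ x :: y :: (l2' ++ [d]) := by
        rw [heq, hl2]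
      have harr : (d' :: l1 ++ [x]) ++ (y :: l2' ++ [d]) = d' :: (m ++ [d]) := by
        rw [hsplit]; simp
      rw [harr]
      exact hC
  · -- case d = b, hence d' < b : consider l = d' :: m
    have hd'b : d' < b := by
      rcases lt_or_eq_of_le hd' with h | h
      · exact h
      · exact absurd ⟨hdb, h⟩ hne
    by_cases hch : (d' :: m).Chain' (fun x y => b < y → x < b)
    · have hhead : ∀ x ∈ (d' :: m).head?, ¬ b < x := by
        intro x hx
        simp only [List.head?_cons, Option.mem_def, Option.some.injEq] at hx
        subst hx
        exact not_lt.mpr hd'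
      have hcnt := chain_count' b (d' :: m) hch hhead
      have h1 : (d' :: m ++ [d]).countP (fun c => decide (b < c))
          = (d' :: m).countP (fun c => decide (b < c)) := by
        have hdec : (decide (b < d)) = false := by simp [not_lt.mpr hd]
        rw [show (d' :: m ++ [d]) = (d' :: m) ++ [d] from by simp, List.countP_append]
        simp [hdec]
      have h2 : (d' :: m ++ [d]).countP (fun c => decide (c < b))
          = (d' :: m).countP (fun c => decide (c < b)) := by
        have hdec : (decide (d < b)) = false := by simp [hdb]
        rw [show (d' :: m ++ [d]) = (d' :: m) ++ [d] from by simp, List.countP_append]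
        simp [hdec]
      omega
    · obtain ⟨l1, x, y, l2, heq, hR⟩ := not_chain'_split hch
      push_neg at hR
      obtain ⟨hby, hbx⟩ := hR
      -- hby : b < y, hbx : b ≤ x
      obtain ⟨l1', hl1⟩ : ∃ l1', l1 = d' :: l1' := by
        cases l1 with
        | nil =>
          exfalso
          have : d' = x := by
            have := congrArg List.head? heq
            simpa using this
          rw [← this] at hbx
          exact absurd (lt_of_lt_of_le hd'b hbx) (lt_irrefl d')
        | cons z l1'' =>
          have h7 : d' = z := by
            have := congrArg List.head? heq
            simpa using this
          exact ⟨l1'', by rw [← h7]⟩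
      apply sign_clash hs d' x y d l1' l2 (lt_of_lt_of_le hd'b hbx) (by rw [hdb]; exact hby)
      apply isRot_of_isRotated
      have hsplit : d' :: m = d' :: l1' ++ x :: y :: l2 := by
        rw [heq, hl1]
      have harr : (d' :: l1' ++ [x]) ++ (y :: l2 ++ [d]) = (d' :: m) ++ [d] := by
        rw [hsplit]; simp
      rw [show (d' :: m ++ [d]) = (d' :: m) ++ [d] from by simp] at hC
      rw [harr]
      exact hC
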